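/- For q > 1 and density operators ρ, σ on finite-dimensional Hilbert spaces, the Tsallis q-entropy satisfies T_q(ρ ⊗ σ) = T_q(ρ) + T_q(σ) if and only if at least one of ρ, σ is a pure state. -/

import Mathlib

open ComplexOrder Matrix Kronecker

open Polynomial

section Helpers

variable {n : Type*} [Fintype n] [DecidableEq n]

lemma my_charmatrix_diagonal (d : n → ℂ) :
    charmatrix (diagonal d) = diagonal (fun i => (X : ℂ[X]) - C (d i)) := by
  apply Matrix.ext; intro i j
  by_cases h : i = j
  · subst h; rw [charmatrix_apply_eq, diagonal_apply_eq d, diagonal_apply_eq (fun i => (X : ℂ[X]) - C (d i))]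

  · rw [charmatrix_apply_ne _ _ _ h, diagonal_apply_ne _ h, diagonal_apply_ne _ h, map_zero,
      neg_zero]

lemma my_charpoly_diagonal (d : n → ℂ) :
    (diagonal d).charpoly = ∏ i, ((X : ℂ[X]) - C (d i)) := by
  rw [Matrix.charpoly, my_charmatrix_diagonal, det_diagonal]

lemma my_charpoly_conj (P Q M : Matrix n n ℂ) (h : P * Q = 1) :
    (P * M * Q).charpoly = M.charpoly := by
  have hmap : C.mapMatrix P * C.mapMatrix Q = 1 := by rw [← _root_.map_mul, h, _root_.map_one]
  have hs : C.mapMatrix P * (scalar n (X : ℂ[X])) * C.mapMatrix Q = scalar n X := by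
    rw [(scalar_commute (X : ℂ[X]) (Commute.all _) (C.mapMatrix P)).symm.eq, mul_assoc, hmap,
      mul_one]
  have hcm : charmatrix (P * M * Q) = C.mapMatrix P * charmatrix M * C.mapMatrix Q := by
    rw [charmatrix, charmatrix, _root_.map_mul, _root_.map_mul, mul_sub, sub_mul, hs, mul_assoc]
  have hd : (C.mapMatrix P).det * (C.mapMatrix Q).det = 1 := by
    rw [← det_mul, hmap, det_one]
  rw [Matrix.charpoly, Matrix.charpoly, hcm, det_mul, det_mul]
  linear_combination M.charmatrix.det * hd

open Kronecker

lemma my_kron_conjTranspose {m : Type*} (A : Matrix n n ℂ) (B : Matrix m m ℂ) :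
    (A ⊗ₖ B)ᴴ = Aᴴ ⊗ₖ Bᴴ := by
  apply Matrix.ext; rintro ⟨i, j⟩ ⟨k, l⟩
  simp [conjTranspose_apply, kroneckerMap_apply, star_mul']

lemma my_kron_isHermitian {m : Type*} {A : Matrix n n ℂ} {B : Matrix m m ℂ}
    (hA : A.IsHermitian) (hB : B.IsHermitian) : (A ⊗ₖ B).IsHermitian := by
  rw [Matrix.IsHermitian, my_kron_conjTranspose, hA.eq, hB.eq]

lemma my_roots_charpoly {M : Matrix n n ℂ} (hM : M.IsHermitian) :
    M.charpoly.roots = Finset.univ.val.map (fun i => (hM.eigenvalues i : ℂ)) := by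
  have h1 : M.charpoly = (diagonal (fun i => (hM.eigenvalues i : ℂ))).charpoly := by
    conv_lhs => rw [hM.spectral_theorem, Unitary.conjStarAlgAut_apply]
    rw [my_charpoly_conj _ _ _ (Matrix.mem_unitaryGroup_iff.mp hM.eigenvectorUnitary.2)]
    rfl
  rw [h1, my_charpoly_diagonal, Finset.prod_eq_multiset_prod]
  have := roots_multiset_prod_X_sub_C (Finset.univ.val.map (fun i => (hM.eigenvalues i : ℂ)))
  rwa [Multiset.map_map] at this

lemma my_roots_charpoly_diagonal (d : n → ℂ) :
    (diagonal d).charpoly.roots = Finset.univ.val.map d := by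
  rw [my_charpoly_diagonal, Finset.prod_eq_multiset_prod]
  have := roots_multiset_prod_X_sub_C (Finset.univ.val.map d)
  rwa [Multiset.map_map] at this

lemma my_kron_eigs {m : Type*} [Fintype m] [DecidableEq m]
    {A : Matrix n n ℂ} {B : Matrix m m ℂ} (hA : A.IsHermitian) (hB : B.IsHermitian) :
    Finset.univ.val.map (fun k : n × m => ((my_kron_isHermitian hA hB).eigenvalues k : ℂ)) =
      Finset.univ.val.map
        (fun k : n × m => ((hA.eigenvalues k.1 : ℂ) * (hB.eigenvalues k.2 : ℂ))) := by
  have h2 : (A ⊗ₖ B).charpoly =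
      (diagonal (fun k : n × m =>
        ((hA.eigenvalues k.1 : ℂ) * (hB.eigenvalues k.2 : ℂ)))).charpoly := by
    conv_lhs => rw [hA.spectral_theorem, hB.spectral_theorem, Unitary.conjStarAlgAut_apply,
      Unitary.conjStarAlgAut_apply]
    rw [mul_kronecker_mul, mul_kronecker_mul, diagonal_kronecker_diagonal,
      my_charpoly_conj _ _ _ (by
        rw [← mul_kronecker_mul, Matrix.mem_unitaryGroup_iff.mp hA.eigenvectorUnitary.2,
          Matrix.mem_unitaryGroup_iff.mp hB.eigenvectorUnitary.2, one_kronecker_one])]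
    rfl
  rw [← my_roots_charpoly (my_kron_isHermitian hA hB), h2, my_roots_charpoly_diagonal]

lemma my_kron_sum_rpow {m : Type*} [Fintype m] [DecidableEq m] (q : ℝ)
    {A : Matrix n n ℂ} {B : Matrix m m ℂ} (hA : A.PosSemidef) (hB : B.PosSemidef) :
    ∑ k : n × m, (my_kron_isHermitian hA.1 hB.1).eigenvalues k ^ q =
      (∑ i, hA.1.eigenvalues i ^ q) * (∑ j, hB.1.eigenvalues j ^ q) := by
  have hmap := congrArg (Multiset.map (fun z : ℂ => z.re ^ q)) (my_kron_eigs hA.1 hB.1)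
  rw [Multiset.map_map, Multiset.map_map] at hmap
  have hsum := congrArg Multiset.sum hmap
  have lhs : ∑ k : n × m, (my_kron_isHermitian hA.1 hB.1).eigenvalues k ^ q =
      (Multiset.map ((fun z : ℂ => z.re ^ q) ∘
        (fun k : n × m => ((my_kron_isHermitian hA.1 hB.1).eigenvalues k : ℂ)))
        Finset.univ.val).sum := rfl
  have rhs : (Multiset.map ((fun z : ℂ => z.re ^ q) ∘
      (fun k : n × m => ((hA.1.eigenvalues k.1 : ℂ) * (hB.1.eigenvalues k.2 : ℂ))))
      Finset.univ.val).sum = ∑ k : n × m, (hA.1.eigenvalues k.1 * hB.1.eigenvalues k.2) ^ q := by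
    rw [Finset.sum]; congr 1; apply Multiset.map_congr rfl; intro k _
    simp [Function.comp, ← Complex.ofReal_mul]
  rw [lhs, hsum, rhs]
  have : ∀ k : n × m, (hA.1.eigenvalues k.1 * hB.1.eigenvalues k.2) ^ q
      = hA.1.eigenvalues k.1 ^ q * hB.1.eigenvalues k.2 ^ q := fun k =>
    Real.mul_rpow (hA.eigenvalues_nonneg _) (hB.eigenvalues_nonneg _)
  rw [Finset.sum_congr rfl (fun k _ => this k), ← Finset.univ_product_univ,
    Finset.sum_product, Finset.sum_mul_sum]

lemma my_sum_eigs {M : Matrix n n ℂ} (hM : M.IsHermitian) (tM : M.trace = 1) :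
    ∑ i, hM.eigenvalues i = 1 := by
  have h : M.trace = ∑ i, (hM.eigenvalues i : ℂ) := by
    conv_lhs => rw [hM.spectral_theorem, Unitary.conjStarAlgAut_apply]
    rw [Matrix.trace_mul_cycle, UnitaryGroup.star_mul_self, one_mul, trace_diagonal]
    rfl
  rw [tM] at h
  have : ((∑ i, hM.eigenvalues i : ℝ) : ℂ) = ((1 : ℝ) : ℂ) := by push_cast; rw [← h]
  exact_mod_cast this

lemma my_key {q : ℝ} (hq : 1 < q) {M : Matrix n n ℂ}
    (hM : M.PosSemidef) (tM : M.trace = 1) :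
    (∑ i, hM.1.eigenvalues i ^ q) = 1 ↔ M.rank = 1 := by
  classical
  set p := hM.1.eigenvalues with hp
  have hnn : ∀ i, 0 ≤ p i := hM.eigenvalues_nonneg
  have hsum : ∑ i, p i = 1 := my_sum_eigs hM.1 tM
  have hle : ∀ i, p i ≤ 1 := fun i => by
    rw [← hsum]
    exact Finset.single_le_sum (fun j _ => hnn j) (Finset.mem_univ i)
  have hq0 : q ≠ 0 := by positivity
  have hpq : ∀ i, p i ^ q ≤ p i := fun i => by
    rcases eq_or_lt_of_le (hnn i) with h0 | h0
    · rw [← h0, Real.zero_rpow hq0]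
    · calc p i ^ q ≤ p i ^ (1 : ℝ) := Real.rpow_le_rpow_of_exponent_ge h0 (hle i) hq.le
        _ = p i := Real.rpow_one _
  rw [hM.1.rank_eq_card_non_zero_eigs]
  have hcard : Fintype.card {i // hM.1.eigenvalues i ≠ 0}
      = (Finset.univ.filter (fun i => p i ≠ 0)).card := Fintype.card_subtype _
  rw [hcard]
  constructor
  · intro hP
    have hz : ∑ i, (p i - p i ^ q) = 0 := by
      rw [Finset.sum_sub_distrib, hsum, hP, sub_self]
    have hall : ∀ i ∈ Finset.univ, p i - p i ^ q = 0 :=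
      (Finset.sum_eq_zero_iff_of_nonneg (fun i _ => sub_nonneg.2 (hpq i))).1 hz
    have h01 : ∀ i, p i = 0 ∨ p i = 1 := fun i => by
      have heq : p i ^ q = p i := by
        have := hall i (Finset.mem_univ i); linarith
      by_contra hcon
      push_neg at hcon
      have h0 : 0 < p i := (hnn i).lt_of_ne (Ne.symm hcon.1)
      have h1 : p i < 1 := (hle i).lt_of_ne hcon.2
      have := Real.rpow_lt_rpow_of_exponent_gt h0 h1 hq
      rw [Real.rpow_one] at this
      linarith
    have hfilter : (Finset.univ.filter (fun i => p i ≠ 0))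
        = Finset.univ.filter (fun i => p i = 1) := by
      apply Finset.filter_congr; intro i _
      rcases h01 i with h | h <;> simp [h]
    have : ∑ i ∈ Finset.univ.filter (fun i => p i ≠ 0), p i = 1 := by
      rw [Finset.sum_filter_ne_zero]; exact hsum
    rw [hfilter] at this
    rw [Finset.sum_congr rfl (fun i hi => (Finset.mem_filter.1 hi).2)] at this
    rw [Finset.sum_const, nsmul_eq_mul, mul_one] at this
    rw [hfilter]
    exact_mod_cast this
  · intro hr
    obtain ⟨a, ha⟩ := Finset.card_eq_one.1 hr
    have hpa0 : ∀ i, i ≠ a → p i = 0 := fun i hi => by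
      by_contra h
      have : i ∈ Finset.univ.filter (fun i => p i ≠ 0) := by simp [h]
      rw [ha, Finset.mem_singleton] at this
      exact hi this
    have hpa : p a = 1 := by
      rw [← hsum, Finset.sum_eq_single a (fun b _ hb => hpa0 b hb) (by simp)]
    rw [Finset.sum_eq_single a (fun b _ hb => by rw [hpa0 b hb, Real.zero_rpow hq0]) (by simp),
      hpa, Real.one_rpow]

end Helpers

noncomputable def Tq {n : Type*} [Fintype n] [DecidableEq n]
    (q : ℝ) (ρ : Matrix n n ℂ) : ℝ :=
  if h : ρ.IsHermitian then (1 - q)⁻¹ * ((∑ j, h.eigenvalues j ^ q) - 1) else 0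

/-- For `q > 1`, `T_q(ρ ⊗ σ) = T_q(ρ) + T_q(σ)` iff at least one of `ρ`, `σ`
is a pure state (rank one). -/
theorem stmt5 {A B : Type*} [Fintype A] [Fintype B] [DecidableEq A] [DecidableEq B]
    (q : ℝ) (hq : 1 < q)
    (ρ : Matrix A A ℂ) (σ : Matrix B B ℂ)
    (hρ : ρ.PosSemidef) (hσ : σ.PosSemidef)
    (tρ : ρ.trace = 1) (tσ : σ.trace = 1) :
    Tq q (ρ ⊗ₖ σ) = Tq q ρ + Tq q σ ↔ (ρ.rank = 1 ∨ σ.rank = 1) := by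
  have hK : (ρ ⊗ₖ σ).IsHermitian := my_kron_isHermitian hρ.1 hσ.1
  rw [Tq, Tq, Tq, dif_pos hρ.1, dif_pos hσ.1, dif_pos hK]
  have hKsum : ∑ k : A × B, hK.eigenvalues k ^ q =
      (∑ i, hρ.1.eigenvalues i ^ q) * (∑ j, hσ.1.eigenvalues j ^ q) := my_kron_sum_rpow q hρ hσ
  rw [hKsum]
  set P := ∑ i, hρ.1.eigenvalues i ^ q with hP
  set Q := ∑ j, hσ.1.eigenvalues j ^ q with hQ
  have hc : (1 - q)⁻¹ ≠ 0 := inv_ne_zero (by linarith)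
  have key : (1 - q)⁻¹ * (P * Q - 1) = (1 - q)⁻¹ * (P - 1) + (1 - q)⁻¹ * (Q - 1)
      ↔ (P - 1) * (Q - 1) = 0 := by
    rw [← mul_add, mul_right_inj' hc]
    constructor <;> intro h <;> nlinarith
  rw [key, mul_eq_zero, sub_eq_zero, sub_eq_zero, hP, hQ, my_key hq hρ tρ, my_key hq hσ tσ]
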